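/- Let X be a finite nonempty set, let E1, E2 : X → ℝ^d, let s : X → {0,1} be a selection indicator with Σ_{x ∈ X} s(x) > 0, let k ∈ {1,…,d}, and let ε > 0. Then the selected-sample average of the feature disagreement is bounded by ε^{−1} times the selected-sample average of the feature-agreement surrogate loss: (Σ_{x ∈ X} (1 − FeatAgree(E1(x), E2(x); k)) · s(x)) / (Σ_{x ∈ X} s(x)) ≤ ε^{−1} · (Σ_{x ∈ X} ℓ_Ftr(E2(x); E1(x), k) · s(x)) / (Σ_{x ∈ X} s(x)). (This is the empirical bound 1 − BCX ≤ ε^{−1} · surrogate term used to derive the differentiable BCXR-Ftr objective.) -/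

import Mathlib

open Finset

/-- `rnk x i` is the rank (1-indexed) of `|x i|` among `|x 1|,…,|x d|` in descending
order, ties broken by index: it is the unique bijection `[d] → [d]` with
`rnk x i < rnk x j` iff `|x i| > |x j|`, or `|x i| = |x j|` and `i < j`. -/
noncomputable def rnk {d : ℕ} (x : Fin d → ℝ) (i : Fin d) : ℕ :=
  (Finset.univ.filter (fun j => |x i| < |x j| ∨ (|x j| = |x i| ∧ j ≤ i))).card

/-- `TopFeatures(x;k)`: indices whose rank is at most `k`. -/
noncomputable def topFeat {d : ℕ} (x : Fin d → ℝ) (k : ℕ) : Finset (Fin d) :=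
  Finset.univ.filter (fun i => rnk x i ≤ k)

/-- `sign(t) = 1` if `t ≥ 0`, else `-1`. -/
noncomputable def sgn (t : ℝ) : ℝ := if 0 ≤ t then 1 else -1

/-- Top-`k` feature agreement. -/
noncomputable def featAgree {d : ℕ} (e1 e2 : Fin d → ℝ) (k : ℕ) : ℝ :=
  ((topFeat e1 k ∩ topFeat e2 k).card : ℝ) / k

/-- Top-`k` rank agreement. -/
noncomputable def rankAgree {d : ℕ} (e1 e2 : Fin d → ℝ) (k : ℕ) : ℝ :=
  (((topFeat e1 k ∩ topFeat e2 k).filter (fun i => rnk e1 i = rnk e2 i)).card : ℝ) / k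

/-- Top-`k` sign agreement. -/
noncomputable def signAgree {d : ℕ} (e1 e2 : Fin d → ℝ) (k : ℕ) : ℝ :=
  (((topFeat e1 k ∩ topFeat e2 k).filter (fun i => sgn (e1 i) = sgn (e2 i))).card : ℝ) / k

/-- Top-`k` signed-rank agreement. -/
noncomputable def signedRankAgree {d : ℕ} (e1 e2 : Fin d → ℝ) (k : ℕ) : ℝ :=
  (((topFeat e1 k ∩ topFeat e2 k).filter
      (fun i => sgn (e1 i) = sgn (e2 i) ∧ rnk e1 i = rnk e2 i)).card : ℝ) / k

/-- `ψ_feat(e2)`: max of `|e2 i|` over `i ∉ TopFeatures(e1;k)` when `k < d`, else `-ε`. -/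
noncomputable def psiFeat {d : ℕ} (e1 e2 : Fin d → ℝ) (k : ℕ) (ε : ℝ) : ℝ :=
  if k < d then sSup ((fun i => |e2 i|) '' {i : Fin d | i ∉ topFeat e1 k}) else -ε

/-- Feature-agreement surrogate loss `ℓ_Ftr(e2; e1, k)`. -/
noncomputable def lossFtr {d : ℕ} (e2 e1 : Fin d → ℝ) (k : ℕ) (ε : ℝ) : ℝ :=
  (∑ i ∈ topFeat e1 k, max 0 (psiFeat e1 e2 k ε - |e2 i| + ε)) / k

/-- `sortD a j` is the `j`-th largest entry of `a` (for `1 ≤ j ≤ d`). -/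
noncomputable def sortD {d : ℕ} (a : Fin d → ℝ) (j : ℕ) : ℝ :=
  if h : d - j < d then (a ∘ Tuple.sort a) ⟨d - j, h⟩ else 0

/-- Rank-agreement surrogate loss `ℓ_Rnk(e2; e1, k)`: the sum over
`I = {(j,i) : j ∈ [k], rank(e1,i) = j}` is realized as the sum over
`i ∈ TopFeatures(e1;k)` with `j = rnk e1 i`. -/
noncomputable def lossRnk {d : ℕ} (e2 e1 : Fin d → ℝ) (k : ℕ) (ε : ℝ) : ℝ :=
  (∑ i ∈ topFeat e1 k,
    max 0 (sortD (Function.update (fun t => |e2 t|) i (-ε)) (rnk e1 i) - |e2 i| + ε)) / k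

/-- `ψ_sign(e2)`: max of `|e2 i|` over `i ∉ TopFeatures(e1;k)` when `k < d`, else `0`. -/
noncomputable def psiSign {d : ℕ} (e1 e2 : Fin d → ℝ) (k : ℕ) : ℝ :=
  if k < d then sSup ((fun i => |e2 i|) '' {i : Fin d | i ∉ topFeat e1 k}) else 0

/-- Sign-agreement surrogate loss `ℓ_Sgn(e2; e1, k)`. -/
noncomputable def lossSgn {d : ℕ} (e2 e1 : Fin d → ℝ) (k : ℕ) (ε : ℝ) : ℝ :=
  (∑ i ∈ topFeat e1 k, max 0 (psiSign e1 e2 k - sgn (e1 i) * e2 i + ε)) / k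

/-- Signed-rank-agreement surrogate loss `ℓ_SgnRnk(e2; e1, k)`. -/
noncomputable def lossSgnRnk {d : ℕ} (e2 e1 : Fin d → ℝ) (k : ℕ) (ε : ℝ) : ℝ :=
  (∑ i ∈ topFeat e1 k,
    max 0 (sortD (Function.update (fun t => |e2 t|) i 0) (rnk e1 i) - sgn (e1 i) * e2 i + ε)) / k

section aux

variable {d : ℕ}

private lemma rel_total (x : Fin d → ℝ) (i j : Fin d) :
    (|x j| < |x i| ∨ (|x i| = |x j| ∧ i ≤ j)) ∨ (|x i| < |x j| ∨ (|x j| = |x i| ∧ j ≤ i)) := by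
  rcases lt_trichotomy |x i| |x j| with h | h | h
  · right; left; exact h
  · rcases le_total i j with hij | hij
    · left; right; exact ⟨h, hij⟩
    · right; right; exact ⟨h.symm, hij⟩
  · left; left; exact h

private lemma rnk_lt_rnk (x : Fin d → ℝ) {i j : Fin d} (hij : i ≠ j)
    (h : |x j| < |x i| ∨ (|x i| = |x j| ∧ i ≤ j)) : rnk x i < rnk x j := by
  apply Finset.card_lt_card
  constructor
  · intro t ht
    simp only [Finset.mem_filter, Finset.mem_univ, true_and] at ht ⊢
    rcases ht with ht | ⟨ht1, ht2⟩
    · rcases h with h | ⟨h1, _⟩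
      · left; exact h.trans ht
      · left; rwa [h1] at ht
    · rcases h with h | ⟨h1, h2⟩
      · left; rw [ht1]; exact h
      · right; exact ⟨ht1.trans h1, ht2.trans h2⟩
  · intro hsub
    have hj : j ∈ Finset.univ.filter (fun t => |x j| < |x t| ∨ (|x t| = |x j| ∧ t ≤ j)) := by
      simp
    have := hsub hj
    simp only [Finset.mem_filter, Finset.mem_univ, true_and] at this
    rcases h with h | ⟨h1, h2⟩ <;> rcases this with h' | ⟨h1', h2'⟩
    · exact absurd (h.trans h') (lt_irrefl _)
    · rw [h1'] at h; exact absurd h (lt_irrefl _)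
    · rw [h1] at h'; exact absurd h' (lt_irrefl _)
    · exact hij (le_antisymm h2 h2')

private lemma rnk_injective (x : Fin d → ℝ) : Function.Injective (rnk x) := by
  intro i j hij
  by_contra hne
  rcases rel_total x i j with h | h
  · exact absurd hij (Nat.ne_of_lt (rnk_lt_rnk x hne h))
  · exact absurd hij.symm (Nat.ne_of_lt (rnk_lt_rnk x (Ne.symm hne) h))

private lemma one_le_rnk (x : Fin d → ℝ) (i : Fin d) : 1 ≤ rnk x i := by
  have hi : i ∈ Finset.univ.filter (fun j => |x i| < |x j| ∨ (|x j| = |x i| ∧ j ≤ i)) := by simp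
  exact Finset.card_pos.mpr ⟨i, hi⟩

private lemma rnk_le (x : Fin d → ℝ) (i : Fin d) : rnk x i ≤ d := by
  have := Finset.card_filter_le (Finset.univ : Finset (Fin d))
    (fun j => |x i| < |x j| ∨ (|x j| = |x i| ∧ j ≤ i))
  simpa [rnk] using this

private lemma image_rnk (x : Fin d → ℝ) :
    Finset.univ.image (rnk x) = Finset.Icc 1 d := by
  apply Finset.eq_of_subset_of_card_le
  · intro n hn
    simp only [Finset.mem_image, Finset.mem_univ, true_and] at hn
    obtain ⟨i, rfl⟩ := hn
    simp [Finset.mem_Icc, one_le_rnk, rnk_le]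
  · rw [Finset.card_image_of_injective _ (rnk_injective x)]
    simp [Nat.card_Icc]

private lemma card_topFeat (x : Fin d → ℝ) {k : ℕ} (hkd : k ≤ d) :
    (topFeat x k).card = k := by
  have : (topFeat x k).card = ((Finset.univ.image (rnk x)).filter (· ≤ k)).card := by
    rw [Finset.filter_image, Finset.card_image_of_injective _ (rnk_injective x)]
    rfl
  rw [this, image_rnk]
  have h2 : (Finset.Icc 1 d).filter (· ≤ k) = Finset.Icc 1 k := by
    ext n; simp only [Finset.mem_filter, Finset.mem_Icc]; omega
  rw [h2, Nat.card_Icc]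
  omega

private lemma pointwise (e1 e2 : Fin d → ℝ) {k : ℕ} (hk : 1 ≤ k) (hkd : k ≤ d)
    {ε : ℝ} (hε : 0 < ε) :
    1 - featAgree e1 e2 k ≤ ε⁻¹ * lossFtr e2 e1 k ε := by
  set T1 := topFeat e1 k with hT1def
  set T2 := topFeat e2 k with hT2def
  have hT1 : T1.card = k := card_topFeat e1 hkd
  -- key pointwise bound on the difference set
  have key : ∀ i ∈ T1 \ T2, ε ≤ max 0 (psiFeat e1 e2 k ε - |e2 i| + ε) := by
    intro i hi
    rw [Finset.mem_sdiff] at hi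
    obtain ⟨hi1, hi2⟩ := hi
    have hrnk : k < rnk e2 i := by
      by_contra h
      exact hi2 (by simp [hT2def, topFeat, Nat.le_of_not_lt h])
    have hkd' : k < d := lt_of_lt_of_le hrnk (rnk_le e2 i)
    -- find j outside T1 with |e2 i| ≤ |e2 j|
    set S := Finset.univ.filter (fun j => |e2 i| < |e2 j| ∨ (|e2 j| = |e2 i| ∧ j ≤ i)) with hSdef
    have hScard : k < S.card := hrnk
    have hnotsub : ¬ S ⊆ T1 := fun h => absurd (Finset.card_le_card h) (by omega)
    have hex : ∃ j ∈ S, j ∉ T1 := by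
      by_contra h
      push_neg at h
      exact hnotsub (fun t ht => h t ht)
    obtain ⟨j, hjS, hjT1⟩ := hex
    have hle : |e2 i| ≤ |e2 j| := by
      simp only [hSdef, Finset.mem_filter, Finset.mem_univ, true_and] at hjS
      rcases hjS with h | ⟨h, _⟩
      · exact h.le
      · exact h.ge
    have hpsi : |e2 j| ≤ psiFeat e1 e2 k ε := by
      rw [psiFeat, if_pos hkd']
      apply le_csSup
      · exact (Set.toFinite _).bddAbove
      · exact ⟨j, hjT1, rfl⟩
    have : ε ≤ psiFeat e1 e2 k ε - |e2 i| + ε := by linarith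
    exact this.trans (le_max_right _ _)
  -- sum bound
  have hsum : ε * ((T1 \ T2).card : ℝ) ≤ ∑ i ∈ T1, max 0 (psiFeat e1 e2 k ε - |e2 i| + ε) := by
    calc ε * ((T1 \ T2).card : ℝ)
        = ∑ _i ∈ T1 \ T2, ε := by rw [Finset.sum_const, nsmul_eq_mul, mul_comm]
      _ ≤ ∑ i ∈ T1 \ T2, max 0 (psiFeat e1 e2 k ε - |e2 i| + ε) := Finset.sum_le_sum key
      _ ≤ ∑ i ∈ T1, max 0 (psiFeat e1 e2 k ε - |e2 i| + ε) :=
          Finset.sum_le_sum_of_subset_of_nonneg (Finset.sdiff_subset)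
            (fun i _ _ => le_max_left _ _)
  have hcard : ((T1 \ T2).card : ℝ) = k - ((T1 ∩ T2).card : ℝ) := by
    have := Finset.card_sdiff_add_card_inter T1 T2
    rw [hT1] at this
    have h2 : (T1 ∩ T2).card ≤ k := by omega
    push_cast [← this]
    ring
  have hk0 : (0:ℝ) < k := by exact_mod_cast hk
  have hfa : 1 - featAgree e1 e2 k = ((T1 \ T2).card : ℝ) / k := by
    rw [featAgree, hcard]
    field_simp
    rfl
  rw [hfa, lossFtr]
  calc ((T1 \ T2).card : ℝ) / k
      = ε⁻¹ * ((ε * ((T1 \ T2).card : ℝ)) / k) := by field_simp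
    _ ≤ ε⁻¹ * ((∑ i ∈ T1, max 0 (psiFeat e1 e2 k ε - |e2 i| + ε)) / k) := by
        gcongr

end aux

/-- Empirical bound used to derive the BCXR-Ftr objective: over a finite nonempty
sample `X` with a `{0,1}` selection indicator `s` of positive total mass, the
selected-sample average feature disagreement is at most `ε⁻¹` times the
selected-sample average surrogate loss. -/
theorem empirical_bcx_bound {d : ℕ} {X : Type*} [Fintype X] [Nonempty X]
    (E1 E2 : X → Fin d → ℝ) (s : X → ℝ) (hs : ∀ x, s x = 0 ∨ s x = 1)
    (hsum : 0 < ∑ x, s x) (k : ℕ) (hk : 1 ≤ k) (hkd : k ≤ d)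
    (ε : ℝ) (hε : 0 < ε) :
    (∑ x, (1 - featAgree (E1 x) (E2 x) k) * s x) / (∑ x, s x) ≤
      ε⁻¹ * ((∑ x, lossFtr (E2 x) (E1 x) k ε * s x) / (∑ x, s x)) := by
  rw [← mul_div_assoc, Finset.mul_sum]
  apply (div_le_div_iff_of_pos_right hsum).mpr
  apply Finset.sum_le_sum
  intro x _
  have hsx : 0 ≤ s x := by rcases hs x with h | h <;> simp [h]
  calc (1 - featAgree (E1 x) (E2 x) k) * s x
      ≤ (ε⁻¹ * lossFtr (E2 x) (E1 x) k ε) * s x :=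
        mul_le_mul_of_nonneg_right (pointwise (E1 x) (E2 x) hk hkd hε) hsx
    _ = ε⁻¹ * (lossFtr (E2 x) (E1 x) k ε * s x) := by ring
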